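/- For every positive integer n and nonnegative integer k, (ζ_{n-1}(1_{k-1})/n) + ∑_{i+j=n, i,j≥1} (ζ_{i-1}(1_{k-1})/i) · (C(2j,j)/4^j) = (2^k/4^n)·C(2n,n)·tₙ(1_k), where tₙ(1_k) = ∑_{n ≥ n₁ > ⋯ > n_k ≥ 1} ∏_{j=1}^k 1/(2n_j - 1). -/

import Mathlib

open Finset

/-- Multiple harmonic sum with `r` ones: `ζₙ(1_r) = ∑_{n ≥ n₁ > ⋯ > n_r ≥ 1} 1/(n₁⋯n_r)`. -/
noncomputable def zeta1 : ℕ → ℕ → ℝ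
  | 0, _ => 1
  | (r+1), n => ∑ j ∈ Finset.Icc 1 n, (1 / (j : ℝ)) * zeta1 r (j - 1)

/-- Multiple t-harmonic sum with `k` ones: `tₙ(1_k) = ∑_{n ≥ n₁ > ⋯ > n_k ≥ 1} ∏ 1/(2n_j-1)`. -/
noncomputable def tharm : ℕ → ℕ → ℝ
  | 0, _ => 1
  | (k+1), n => ∑ j ∈ Finset.Icc 1 n, (1 / (2 * (j : ℝ) - 1)) * tharm k (j - 1)

noncomputable def cb (j : ℕ) : ℝ := (Nat.choose (2 * j) j : ℝ) / 4 ^ j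

lemma cb_zero : cb 0 = 1 := by simp [cb]

lemma cb_succ (m : ℕ) : ((m : ℝ) + 1) * cb (m + 1) = ((m : ℝ) + 1 / 2) * cb m := by
  have h := Nat.succ_mul_centralBinom_succ m
  have h' : ((m + 1) * Nat.centralBinom (m + 1) : ℝ) = (2 * (2 * m + 1) * Nat.centralBinom m : ℝ) := by
    exact_mod_cast congrArg (Nat.cast : ℕ → ℝ) h
  unfold cb
  rw [show 2 * (m + 1) = 2 * m + 2 from rfl]
  have hc1 : (Nat.choose (2 * m + 2) (m + 1) : ℝ) = Nat.centralBinom (m + 1) := by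
    simp [Nat.centralBinom, Nat.mul_succ]
  have hc2 : (Nat.choose (2 * m) m : ℝ) = Nat.centralBinom m := by simp [Nat.centralBinom]
  rw [hc1, hc2]
  have h4 : (4 : ℝ) ^ m ≠ 0 := by positivity
  field_simp
  push_cast at h'
  linear_combination (2 * (4:ℝ)^m) * h'

lemma zeta1_zero (r : ℕ) : zeta1 (r + 1) 0 = 0 := by simp [zeta1]

lemma tharm_zero (k : ℕ) : tharm (k + 1) 0 = 0 := by simp [tharm]

lemma zeta1_succ (r j : ℕ) :
    zeta1 (r + 1) (j + 1) = zeta1 (r + 1) j + 1 / ((j : ℝ) + 1) * zeta1 r j := by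
  show (∑ i ∈ Finset.Icc 1 (j+1), (1 / (i : ℝ)) * zeta1 r (i - 1)) = _
  rw [Finset.sum_Icc_succ_top (by omega)]
  push_cast
  simp [zeta1]

lemma tharm_succ (k n : ℕ) :
    tharm (k + 1) (n + 1) = tharm (k + 1) n + 1 / (2 * ((n : ℝ) + 1) - 1) * tharm k n := by
  show (∑ j ∈ Finset.Icc 1 (n+1), (1 / (2 * (j : ℝ) - 1)) * tharm k (j - 1)) = _
  rw [Finset.sum_Icc_succ_top (by omega)]
  push_cast
  simp [tharm]

/-- The convolution side. -/
noncomputable def S : ℕ → ℕ → ℝ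
  | 0, n => cb n
  | (k+1), n => ∑ i ∈ Finset.Icc 1 n, zeta1 k (i - 1) / i * cb (n - i)

lemma S_eq_range (k n : ℕ) :
    S (k + 1) n = ∑ i ∈ Finset.range n, zeta1 k i / ((i : ℝ) + 1) * cb (n - 1 - i) := by
  show (∑ i ∈ Finset.Icc 1 n, zeta1 k (i - 1) / i * cb (n - i)) = _
  rw [← Finset.Ico_add_one_right_eq_Icc, Finset.sum_Ico_eq_sum_range]
  apply Finset.sum_congr (by norm_num [Nat.succ_sub_one])
  intro i _
  have h1 : 1 + i - 1 = i := by omega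
  have h2 : n - (1 + i) = n - 1 - i := by omega
  rw [h1, h2]
  push_cast
  ring_nf

lemma S_zero (k : ℕ) : S (k + 1) 0 = 0 := by
  show (∑ i ∈ Finset.Icc 1 0, zeta1 k (i - 1) / i * cb (0 - i)) = 0
  simp

/-- "A = rest + S k n" step. -/
lemma A_step (k n : ℕ) :
    ∑ i ∈ Finset.range (n + 1), zeta1 k i * cb (n - i)
      = (∑ i ∈ Finset.range n, zeta1 k i * cb (n - 1 - i)) + S k n := by
  rw [Finset.sum_range_succ']
  have hshift : ∀ i ∈ Finset.range n,
      zeta1 k (i + 1) * cb (n - (i + 1)) = zeta1 k (i + 1) * cb (n - 1 - i) := by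
    intro i _
    congr 2
    omega
  rw [Finset.sum_congr rfl hshift]
  cases k with
  | zero =>
    simp only [zeta1, Nat.sub_zero]
    show (∑ i ∈ Finset.range n, 1 * cb (n - 1 - i)) + 1 * cb n
        = (∑ i ∈ Finset.range n, 1 * cb (n - 1 - i)) + S 0 n
    have hS0 : S 0 n = cb n := rfl
    rw [hS0]; ring
  | succ r =>
    rw [zeta1_zero]
    simp only [zero_mul, add_zero]
    have : ∀ i ∈ Finset.range n,
        zeta1 (r + 1) (i + 1) * cb (n - 1 - i)
          = zeta1 (r + 1) i * cb (n - 1 - i) + zeta1 r i / ((i : ℝ) + 1) * cb (n - 1 - i) := by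
      intro i _
      rw [zeta1_succ]
      ring
    rw [Finset.sum_congr rfl this, Finset.sum_add_distrib, S_eq_range]

lemma S_rec (k n : ℕ) :
    ((n : ℝ) + 1) * S (k + 1) (n + 1) = ((n : ℝ) + 1 / 2) * S (k + 1) n + S k n := by
  rw [S_eq_range, S_eq_range, Finset.mul_sum]
  have hsimp : ∀ i, n + 1 - 1 - i = n - i := fun i => by omega
  -- peel the top term i = n
  rw [Finset.sum_range_succ]
  -- treat the i < n terms
  have key : ∀ i ∈ Finset.range n,
      ((n : ℝ) + 1) * (zeta1 k i / ((i : ℝ) + 1) * cb (n + 1 - 1 - i))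
        = zeta1 k i * cb (n - i)
          + ((n : ℝ) + 1 / 2) * (zeta1 k i / ((i : ℝ) + 1) * cb (n - 1 - i))
          - zeta1 k i * cb (n - 1 - i) := by
    intro i hi
    have hin : i < n := Finset.mem_range.mp hi
    rw [hsimp i]
    have hcb := cb_succ (n - 1 - i)
    have h1 : n - 1 - i + 1 = n - i := by omega
    rw [h1] at hcb
    have h2 : ((n - 1 - i : ℕ) : ℝ) = (n : ℝ) - 1 - i := by
      have : (n - 1 - i : ℕ) = n - (i + 1) := by omega
      rw [this, Nat.cast_sub (by omega)]
      push_cast; ring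
    rw [h2] at hcb
    have hi0 : ((i : ℝ) + 1) ≠ 0 := by positivity
    have hdc : zeta1 k i / ((i : ℝ) + 1) * ((i : ℝ) + 1) = zeta1 k i := div_mul_cancel₀ _ hi0
    linear_combination (zeta1 k i / ((i : ℝ) + 1)) * hcb + (cb (n - i) - cb (n - 1 - i)) * hdc
  rw [Finset.sum_congr rfl key]
  rw [hsimp n]
  have htop : ((n : ℝ) + 1) * (zeta1 k n / ((n : ℝ) + 1) * cb (n - n)) = zeta1 k n * cb (n - n) := by
    have hn0 : ((n : ℝ) + 1) ≠ 0 := by positivity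
    field_simp
  rw [htop]
  have hA := A_step k n
  rw [Finset.sum_range_succ] at hA
  rw [Finset.sum_sub_distrib, Finset.sum_add_distrib]
  rw [← Finset.mul_sum]
  linarith [hA]

/-- The closed-form side. -/
noncomputable def R (k n : ℕ) : ℝ := 2 ^ k * cb n * tharm k n

lemma R_rec (k n : ℕ) :
    ((n : ℝ) + 1) * R (k + 1) (n + 1) = ((n : ℝ) + 1 / 2) * R (k + 1) n + R k n := by
  unfold R
  rw [tharm_succ]
  have hcb := cb_succ n
  have h1 : (2 * ((n : ℝ) + 1) - 1) ≠ 0 := by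
    have : 2 * ((n : ℝ) + 1) - 1 = 2 * (n : ℝ) + 1 := by ring
    rw [this]; positivity
  have hw : (2 * ((n : ℝ) + 1) - 1) * (1 / (2 * ((n : ℝ) + 1) - 1)) = 1 := by
    field_simp
  linear_combination (2 ^ (k + 1) * (tharm (k + 1) n + 1 / (2 * ((n : ℝ) + 1) - 1) * tharm k n)) * hcb
    + (2 ^ k * cb n * tharm k n) * hw

lemma S_eq_R : ∀ k n, S k n = R k n := by
  intro k
  induction k with
  | zero =>
    intro n
    show cb n = 2 ^ 0 * cb n * tharm 0 n
    have ht : tharm 0 n = 1 := rfl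
    rw [ht]; ring
  | succ k ih =>
    intro n
    induction n with
    | zero =>
      rw [S_zero]
      show (0 : ℝ) = 2 ^ (k + 1) * cb 0 * tharm (k + 1) 0
      rw [tharm_zero]; ring
    | succ n ihn =>
      have h := S_rec k n
      rw [ihn, ih n] at h
      have h2 := R_rec k n
      have hn1 : ((n : ℝ) + 1) ≠ 0 := by positivity
      exact mul_left_cancel₀ hn1 (h.trans h2.symm)

theorem cauchy_product_tharm (n k : ℕ) (hn : 1 ≤ n) :
    (if k = 0 then (Nat.choose (2 * n) n : ℝ) / 4 ^ n
     else zeta1 (k - 1) (n - 1) / n +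
       ∑ i ∈ Finset.Icc 1 (n - 1), zeta1 (k - 1) (i - 1) / i *
         ((Nat.choose (2 * (n - i)) (n - i) : ℝ) / 4 ^ (n - i)))
      = 2 ^ k / 4 ^ n * (Nat.choose (2 * n) n : ℝ) * tharm k n := by
  cases k with
  | zero =>
    rw [if_pos rfl]
    have ht : tharm 0 n = 1 := rfl
    rw [ht]; ring
  | succ k =>
    rw [if_neg (Nat.succ_ne_zero k)]
    obtain ⟨m, rfl⟩ : ∃ m, n = m + 1 := ⟨n - 1, by omega⟩
    have hLHS : zeta1 (k + 1 - 1) (m + 1 - 1) / (m + 1 : ℕ) +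
        ∑ i ∈ Finset.Icc 1 (m + 1 - 1), zeta1 (k + 1 - 1) (i - 1) / i *
          ((Nat.choose (2 * (m + 1 - i)) (m + 1 - i) : ℝ) / 4 ^ (m + 1 - i))
        = S (k + 1) (m + 1) := by
      show _ = ∑ i ∈ Finset.Icc 1 (m + 1), zeta1 k (i - 1) / i * cb (m + 1 - i)
      rw [Finset.sum_Icc_succ_top (by omega)]
      have h1 : ∀ i ∈ Finset.Icc 1 m,
          zeta1 k (i - 1) / i * ((Nat.choose (2 * (m + 1 - i)) (m + 1 - i) : ℝ) / 4 ^ (m + 1 - i))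
            = zeta1 k (i - 1) / i * cb (m + 1 - i) := fun i _ => rfl
      simp only [Nat.add_sub_cancel]
      rw [Finset.sum_congr rfl h1,
        show m + 1 - (m + 1) = 0 from by omega, cb_zero, mul_one]
      push_cast
      ring
    rw [hLHS, S_eq_R]
    show 2 ^ (k + 1) * cb (m + 1) * tharm (k + 1) (m + 1) = _
    unfold cb
    ring
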